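/- (FDR control of the weighted linear step-up under PRDS.) Let H be a finite set, Λ : H → ℝ>0, π : H → [0,1], α > 0. Suppose the p-values (p_h)_{h∈H} are PRDS on H₀ (in the conditioning-on-{p_h ≤ u} sense) and P(p_h ≤ t) ≤ t for all t and all h ∈ H₀. Let R be the step-up procedure associated to the threshold collection Δ(h,r) = α π(h) r, i.e., R = L_Δ(r̂) with r̂ = max{r ≥ 0 : |L_Δ(r)| ≥ r}. Then FDR(R) ≤ α · Σ_{h∈H₀} Λ(h) π(h). -/

import Mathlib

open MeasureTheory ENNReal Set Finset

namespace FDRAux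

variable {Ω : Type*} [MeasurableSpace Ω]

noncomputable def headSet (E : ℝ → Set Ω) : List ℝ → Set Ω
  | [] => ∅
  | v :: _ => E v

noncomputable def Tsum (P : Measure Ω) (A E : ℝ → Set Ω) : List ℝ → ℝ
  | [] => 0
  | v :: l => (P ((E v \ headSet E l) ∩ A v)).toReal / v + Tsum P A E l

noncomputable def betaP (P : Measure Ω) (A E : ℝ → Set Ω) : List ℝ → ℝ
  | [] => 0
  | v :: l => if 0 < (P (A v)).toReal then (P (E v ∩ A v)).toReal / (P (A v)).toReal
      else betaP P A E l

lemma betaP_nonneg (P : Measure Ω) (A E : ℝ → Set Ω) :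
    ∀ l : List ℝ, 0 ≤ betaP P A E l
  | [] => le_refl 0
  | v :: l => by
      rw [betaP]
      split
      · positivity
      · exact betaP_nonneg P A E l

lemma betaP_le_one (P : Measure Ω) [IsFiniteMeasure P] (A E : ℝ → Set Ω) :
    ∀ l : List ℝ, betaP P A E l ≤ 1
  | [] => zero_le_one
  | v :: l => by
      rw [betaP]
      split
      · rename_i hpos
        rw [div_le_one hpos]
        exact ENNReal.toReal_mono (measure_ne_top _ _) (measure_mono inter_subset_right)
      · exact betaP_le_one P A E l

lemma key_induction (P : Measure Ω) [IsProbabilityMeasure P]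
    (A E : ℝ → Set Ω) (c : ℝ) (hc : 0 ≤ c) :
    ∀ l : List ℝ, (∀ v ∈ l, MeasurableSet (A v)) → (∀ v ∈ l, MeasurableSet (E v)) →
    l.Pairwise (· < ·) → (∀ v ∈ l, 0 < v) →
    (∀ v ∈ l, (P (A v)).toReal ≤ c * v) →
    (∀ v ∈ l, ∀ w ∈ l, v ≤ w → A v ⊆ A w) →
    (∀ v ∈ l, ∀ w ∈ l, v ≤ w → E w ⊆ E v) →
    (∀ v ∈ l, ∀ w ∈ l, v ≤ w → 0 < (P (A v)).toReal →
      (P (E w ∩ A w)).toReal / (P (A w)).toReal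
        ≤ (P (E w ∩ A v)).toReal / (P (A v)).toReal) →
    Tsum P A E l ≤ c * betaP P A E l
  | [] => by intro _ _ _ _ _ _ _ _; simp [Tsum, betaP]
  | v :: l => by
    intro hA hE hsort hpos hbound hAmono hEanti hprds
    have hsort' : l.Pairwise (· < ·) := hsort.of_cons
    have hvl : ∀ w ∈ l, v < w := fun w hw => (List.pairwise_cons.mp hsort).1 w hw
    have IH : Tsum P A E l ≤ c * betaP P A E l :=
      key_induction P A E c hc l
        (fun w hw => hA w (List.mem_cons_of_mem _ hw))
        (fun w hw => hE w (List.mem_cons_of_mem _ hw))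
        hsort'
        (fun w hw => hpos w (List.mem_cons_of_mem _ hw))
        (fun w hw => hbound w (List.mem_cons_of_mem _ hw))
        (fun x hx y hy => hAmono x (List.mem_cons_of_mem _ hx) y (List.mem_cons_of_mem _ hy))
        (fun x hx y hy => hEanti x (List.mem_cons_of_mem _ hx) y (List.mem_cons_of_mem _ hy))
        (fun x hx y hy => hprds x (List.mem_cons_of_mem _ hx) y (List.mem_cons_of_mem _ hy))
    have hv : 0 < v := hpos v (List.mem_cons_self)
    have hvmem : v ∈ v :: l := List.mem_cons_self
    rw [Tsum, betaP]
    by_cases hav : 0 < (P (A v)).toReal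
    · -- main case
      simp only [hav, if_pos]
      set av := (P (A v)).toReal with hav_def
      set bv := (P (E v ∩ A v)).toReal / av with hbv_def
      -- head set is contained in E v, and measurable
      have hhead_sub : headSet E l ⊆ E v := by
        cases l with
        | nil => simp [headSet]
        | cons w l' =>
          exact hEanti v hvmem w (List.mem_cons_of_mem _ (List.mem_cons_self))
            (le_of_lt (hvl w (List.mem_cons_self)))
      have hhead_meas : MeasurableSet (headSet E l) := by
        cases l with
        | nil => exact MeasurableSet.empty
        | cons w l' => exact hE w (List.mem_cons_of_mem _ (List.mem_cons_self))
      -- first term rewriting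
      have hdiff : (E v \ headSet E l) ∩ A v = (E v ∩ A v) \ (headSet E l ∩ A v) := by
        ext x; simp [and_comm]; tauto
      have hmeas_small : P (headSet E l ∩ A v) ≤ P (E v ∩ A v) :=
        measure_mono (inter_subset_inter_left _ hhead_sub)
      have hPdiff : (P ((E v \ headSet E l) ∩ A v)).toReal
          = (P (E v ∩ A v)).toReal - (P (headSet E l ∩ A v)).toReal := by
        rw [hdiff, measure_diff (inter_subset_inter_left _ hhead_sub)
          ((hhead_meas.inter (hA v hvmem)).nullMeasurableSet) (measure_ne_top _ _),
          ENNReal.toReal_sub_of_le hmeas_small (measure_ne_top _ _)]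
      -- the key inequality: P(head ∩ A v).toReal ≥ av * betaP l
      have hkey : av * betaP P A E l ≤ (P (headSet E l ∩ A v)).toReal := by
        cases l with
        | nil =>
          simp [betaP, ENNReal.toReal_nonneg]
        | cons w l' =>
          have hwmem : w ∈ v :: w :: l' := List.mem_cons_of_mem _ (List.mem_cons_self)
          have hvw : v ≤ w := le_of_lt (hvl w (List.mem_cons_self))
          have hAsub : A v ⊆ A w := hAmono v hvmem w hwmem hvw
          have haw : 0 < (P (A w)).toReal :=
            lt_of_lt_of_le hav (ENNReal.toReal_mono (measure_ne_top _ _) (measure_mono hAsub))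
          have hb : betaP P A E (w :: l') = (P (E w ∩ A w)).toReal / (P (A w)).toReal := by
            rw [betaP, if_pos haw]
          rw [hb, headSet]
          have := hprds v hvmem w hwmem hvw hav
          calc av * ((P (E w ∩ A w)).toReal / (P (A w)).toReal)
              ≤ av * ((P (E w ∩ A v)).toReal / av) := by
                apply mul_le_mul_of_nonneg_left this (le_of_lt hav)
            _ = (P (E w ∩ A v)).toReal := by field_simp
      have hbetal_le_bv : betaP P A E l ≤ bv := by
        cases l with
        | nil => simp [betaP, hbv_def]; positivity
        | cons w l' =>
          have hwmem : w ∈ v :: w :: l' := List.mem_cons_of_mem _ (List.mem_cons_self)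
          have hvw : v ≤ w := le_of_lt (hvl w (List.mem_cons_self))
          have hAsub : A v ⊆ A w := hAmono v hvmem w hwmem hvw
          have haw : 0 < (P (A w)).toReal :=
            lt_of_lt_of_le hav (ENNReal.toReal_mono (measure_ne_top _ _) (measure_mono hAsub))
          have hb : betaP P A E (w :: l') = (P (E w ∩ A w)).toReal / (P (A w)).toReal := by
            rw [betaP, if_pos haw]
          rw [hb]
          refine le_trans (hprds v hvmem w hwmem hvw hav) ?_
          rw [hbv_def]
          exact div_le_div_of_nonneg_right
            (ENNReal.toReal_mono (measure_ne_top _ _)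
              (measure_mono (inter_subset_inter_left _
                (hEanti v hvmem w hwmem hvw)))) (le_of_lt hav)
      -- now the arithmetic
      have hEvAv : (P (E v ∩ A v)).toReal = av * bv := by
        rw [hbv_def]; field_simp
      have havv : av / v ≤ c := by
        rw [div_le_iff₀ hv]
        exact hbound v hvmem
      have h1 : (P ((E v \ headSet E l) ∩ A v)).toReal / v
          ≤ c * bv - c * betaP P A E l := by
        rw [hPdiff, hEvAv]
        have step1 : (av * bv - (P (headSet E l ∩ A v)).toReal) / v
            ≤ (av * bv - av * betaP P A E l) / v :=
          div_le_div_of_nonneg_right (by linarith [hkey]) (le_of_lt hv)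
        have step2 : (av * bv - av * betaP P A E l) / v
            = (av / v) * (bv - betaP P A E l) := by ring
        have step3 : (av / v) * (bv - betaP P A E l) ≤ c * (bv - betaP P A E l) :=
          mul_le_mul_of_nonneg_right havv (by linarith [hbetal_le_bv])
        calc (av * bv - (P (headSet E l ∩ A v)).toReal) / v
            ≤ (av / v) * (bv - betaP P A E l) := by rw [← step2]; exact step1
          _ ≤ c * (bv - betaP P A E l) := step3
          _ = c * bv - c * betaP P A E l := by ring
      linarith [IH]
    · -- degenerate case : P (A v) = 0
      simp only [hav, if_neg, not_false_iff]
      have hPA0 : P (A v) = 0 := by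
        by_contra hne
        exact hav (ENNReal.toReal_pos hne (measure_ne_top _ _))
      have h0 : P ((E v \ headSet E l) ∩ A v) = 0 :=
        measure_mono_null inter_subset_right hPA0
      rw [h0]
      simpa using IH


variable {ι : Type*} [Fintype ι]

noncomputable def SfinD (Λ : ι → ℝ) : Finset ℝ :=
  Finset.univ.powerset.image (fun T : Finset ι => ∑ h ∈ T, Λ h)

noncomputable def ERset (Λ π : ι → ℝ) (α v : ℝ) : Set (ι → ℝ) :=
  {z | ∃ s ∈ SfinD Λ, v ≤ s ∧
    s ≤ ∑ g ∈ Finset.univ.filter (fun g => z g ≤ α * π g * s), Λ g}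

lemma ERset_measurable (Λ π : ι → ℝ) (α v : ℝ) : MeasurableSet (ERset Λ π α v) := by
  have : ERset Λ π α v = ⋃ s ∈ (SfinD Λ : Finset ℝ), {z : ι → ℝ | v ≤ s ∧
      s ≤ ∑ g ∈ Finset.univ.filter (fun g => z g ≤ α * π g * s), Λ g} := by
    ext z; simp only [ERset, Set.mem_iUnion, Set.mem_setOf_eq, Finset.mem_coe]; tauto
  rw [this]
  apply Finset.measurableSet_biUnion
  intro s _
  have hmeq : {z : ι → ℝ | v ≤ s ∧
      s ≤ ∑ g ∈ Finset.univ.filter (fun g => z g ≤ α * π g * s), Λ g}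
      = {z : ι → ℝ | v ≤ s} ∩ {z : ι → ℝ |
        s ≤ ∑ g ∈ Finset.univ.filter (fun g => z g ≤ α * π g * s), Λ g} := by
    ext z; simp [Set.mem_inter_iff]
  rw [hmeq]
  apply (MeasurableSet.const _).inter
  have hF : Measurable (fun z : ι → ℝ =>
      ∑ g ∈ Finset.univ.filter (fun g => z g ≤ α * π g * s), Λ g) := by
    have : (fun z : ι → ℝ =>
        ∑ g ∈ Finset.univ.filter (fun g => z g ≤ α * π g * s), Λ g)
        = fun z => ∑ g : ι, if z g ≤ α * π g * s then Λ g else 0 := by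
      funext z; rw [Finset.sum_filter]
    rw [this]
    apply Finset.measurable_sum
    intro g _
    exact Measurable.ite (measurableSet_le (measurable_pi_apply g) measurable_const)
      measurable_const measurable_const
  exact measurableSet_le measurable_const hF

lemma ERset_anti (Λ π : ι → ℝ) (hΛ : ∀ h, 0 < Λ h) (α : ℝ) (v : ℝ)
    (z z' : ι → ℝ) (hz : ∀ i, z i ≤ z' i) (h : z' ∈ ERset Λ π α v) :
    z ∈ ERset Λ π α v := by
  obtain ⟨s, hs, hvs, hle⟩ := h
  refine ⟨s, hs, hvs, le_trans hle ?_⟩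
  apply Finset.sum_le_sum_of_subset_of_nonneg
  · intro g hg
    simp only [Finset.mem_filter, Finset.mem_univ, true_and] at hg ⊢
    exact le_trans (hz g) hg
  · intro g _ _; exact (hΛ g).le

end FDRAux


open FDRAux

/-- Theorem 4.1 (PRDS case): the π-weighted linear step-up procedure has its
Λ-weighted FDR bounded by `α Σ_{h∈H₀} Λ(h) π(h)` when the p-values are PRDS on
`H₀` (in the conditioning form). -/
theorem FDR_control_weighted_linear_step_up_PRDS
    {Ω : Type*} [MeasurableSpace Ω] (P : Measure Ω) [IsProbabilityMeasure P]
    {ι : Type*} [Fintype ι] [DecidableEq ι]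
    (H₀ : Finset ι) (Λ : ι → ℝ) (hΛ : ∀ h, 0 < Λ h)
    (π : ι → ℝ) (hπ : ∀ h, π h ∈ Set.Icc (0:ℝ) 1) (α : ℝ) (hα : 0 < α)
    (p : ι → Ω → ℝ) (hp : ∀ h, Measurable (p h))
    (hprange : ∀ h ω, p h ω ∈ Set.Icc (0:ℝ) 1)
    (hUnif : ∀ h ∈ H₀, ∀ t : ℝ, 0 ≤ t → t ≤ 1 →
      P {ω | p h ω ≤ t} ≤ ENNReal.ofReal t)
    -- the p-values are PRDS on H₀ (conditioning form)
    (hPRDS : ∀ h ∈ H₀, ∀ D : Set (ι → ℝ), MeasurableSet D →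
      (∀ z z' : ι → ℝ, z ∈ D → (∀ i, z i ≤ z' i) → z' ∈ D) →
      ∀ u u' : ℝ, u ≤ u' → 0 < P {ω | p h ω ≤ u} →
        P {ω | (fun i => p i ω) ∈ D ∧ p h ω ≤ u} / P {ω | p h ω ≤ u}
          ≤ P {ω | (fun i => p i ω) ∈ D ∧ p h ω ≤ u'} / P {ω | p h ω ≤ u'})
    -- R is the step-up procedure for the threshold collection Δ(h,r) = α π(h) r
    (rhat : Ω → ℝ) (R : Ω → Finset ι)
    (hR : ∀ ω, R ω = Finset.univ.filter (fun h => p h ω ≤ α * π h * rhat ω))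
    (hrhat0 : ∀ ω, 0 ≤ rhat ω)
    (hrhatmem : ∀ ω, rhat ω ≤
      ∑ h ∈ Finset.univ.filter (fun h => p h ω ≤ α * π h * rhat ω), Λ h)
    (hrhatmax : ∀ ω, ∀ r : ℝ, 0 ≤ r →
      r ≤ ∑ h ∈ Finset.univ.filter (fun h => p h ω ≤ α * π h * r), Λ h →
      r ≤ rhat ω) :
    ∫⁻ ω, ENNReal.ofReal
        (if 0 < ∑ g ∈ R ω, Λ g
          then (∑ g ∈ R ω ∩ H₀, Λ g) / (∑ g ∈ R ω, Λ g) else 0) ∂P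
      ≤ ENNReal.ofReal (α * ∑ h ∈ H₀, Λ h * π h) := by
  classical
  set V : Finset ℝ := (SfinD Λ).filter (fun v => 0 < v) with hV
  set E₀ : ℝ → Set Ω := fun v => {ω | v ≤ rhat ω} with hE₀
  set A₀ : ι → ℝ → Set Ω := fun h v => {ω | p h ω ≤ α * π h * v} with hA₀
  have hΛsum0 : ∀ T : Finset ι, (0:ℝ) ≤ ∑ g ∈ T, Λ g :=
    fun T => Finset.sum_nonneg fun g _ => (hΛ g).le
  -- rhat equals the weighted size of R
  have hrhat_eq : ∀ ω, rhat ω = ∑ g ∈ R ω, Λ g := by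
    intro ω
    rw [hR]
    set r1 := ∑ g ∈ Finset.univ.filter (fun g => p g ω ≤ α * π g * rhat ω), Λ g with hr1
    have h1 : rhat ω ≤ r1 := hrhatmem ω
    have h2 : r1 ≤ rhat ω := by
      apply hrhatmax ω r1 (hΛsum0 _)
      apply Finset.sum_le_sum_of_subset_of_nonneg
      · intro g hg
        simp only [Finset.mem_filter, Finset.mem_univ, true_and] at hg ⊢
        refine le_trans hg ?_
        exact mul_le_mul_of_nonneg_left h1 (mul_nonneg hα.le (hπ g).1)
      · intro g _ _; exact (hΛ g).le
    linarith
  have hrhatSfin : ∀ ω, rhat ω ∈ SfinD Λ := by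
    intro ω
    rw [hrhat_eq ω]
    exact Finset.mem_image.mpr ⟨R ω, Finset.mem_powerset.mpr (Finset.subset_univ _), rfl⟩
  -- measurable map to the p-value vector
  have hmp : Measurable (fun ω => (fun i => p i ω)) :=
    measurable_pi_lambda _ fun i => hp i
  -- event {v ≤ rhat} as a preimage
  have hEvpre : ∀ v : ℝ, 0 < v →
      E₀ v = (fun ω => (fun i => p i ω)) ⁻¹' (ERset Λ π α v) := by
    intro v hv
    ext ω
    simp only [hE₀, Set.mem_setOf_eq, Set.mem_preimage]
    constructor
    · intro hle
      exact ⟨rhat ω, hrhatSfin ω, hle, hrhatmem ω⟩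
    · rintro ⟨s, _, hvs, hle⟩
      exact le_trans hvs (hrhatmax ω s (le_trans hv.le hvs) hle)
  have hEmeas : ∀ v : ℝ, 0 < v → MeasurableSet (E₀ v) := by
    intro v hv
    rw [hEvpre v hv]
    exact hmp (ERset_measurable Λ π α v)
  have hAmeas : ∀ (h : ι) (v : ℝ), MeasurableSet (A₀ h v) := by
    intro h v
    exact measurableSet_le (hp h) measurable_const
  have hEanti : ∀ v w : ℝ, v ≤ w → E₀ w ⊆ E₀ v := by
    intro v w hvw ω hω
    exact le_trans hvw hω
  have hAmono : ∀ (h : ι) (v w : ℝ), v ≤ w → A₀ h v ⊆ A₀ h w := by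
    intro h v w hvw ω hω
    exact le_trans hω (mul_le_mul_of_nonneg_left hvw (mul_nonneg hα.le (hπ h).1))
  have hVpos : ∀ v ∈ V, (0:ℝ) < v := by
    intro v hv; exact (Finset.mem_filter.mp hv).2
  -- membership of rhat in V when positive
  have hrhatV : ∀ ω, 0 < rhat ω → rhat ω ∈ V := by
    intro ω h0
    exact Finset.mem_filter.mpr ⟨hrhatSfin ω, h0⟩
  -- {rhat = v} is measurable for v ∈ V
  have hrhateqset : ∀ v ∈ V, {ω | rhat ω = v}
      = E₀ v \ ⋃ w ∈ V.filter (fun w => v < w), E₀ w := by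
    intro v hv
    ext ω
    simp only [Set.mem_diff, Set.mem_iUnion, Set.mem_setOf_eq, hE₀,
      Finset.mem_filter, exists_prop, not_exists, not_and, not_le]
    constructor
    · rintro rfl
      exact ⟨le_refl _, fun w hw => hw.2⟩
    · rintro ⟨hle, hno⟩
      by_contra hne
      have h0 : 0 < rhat ω := lt_of_lt_of_le (hVpos v hv) hle
      have hmem : rhat ω ∈ V := hrhatV ω h0
      have : v < rhat ω := lt_of_le_of_ne hle (fun h => hne h.symm)
      exact absurd (hno (rhat ω) ⟨hmem, this⟩) (lt_irrefl _)
  have hrhatmeas : ∀ v ∈ V, MeasurableSet {ω | rhat ω = v} := by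
    intro v hv
    rw [hrhateqset v hv]
    exact (hEmeas v (hVpos v hv)).diff
      (Finset.measurableSet_biUnion _ fun w hw =>
        hEmeas w (hVpos w (Finset.mem_filter.mp hw).1))
  -- the integrand pointwise identity
  have hpoint : ∀ ω, ENNReal.ofReal
      (if 0 < ∑ g ∈ R ω, Λ g
        then (∑ g ∈ R ω ∩ H₀, Λ g) / (∑ g ∈ R ω, Λ g) else 0)
      = ∑ v ∈ V, ∑ h ∈ H₀, ENNReal.ofReal (Λ h / v) *
          ({ω | rhat ω = v} ∩ A₀ h v).indicator (fun _ => (1:ℝ≥0∞)) ω := by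
    intro ω
    rw [← hrhat_eq ω]
    by_cases h0 : 0 < rhat ω
    · have hrV : rhat ω ∈ V := hrhatV ω h0
      rw [if_pos h0]
      rw [Finset.sum_eq_single_of_mem (rhat ω) hrV (fun v hv hne =>
        Finset.sum_eq_zero (fun h _ => by
          rw [Set.indicator_of_notMem, mul_zero]
          intro hmem
          have h1 : rhat ω = v := hmem.1
          exact hne h1.symm))]
      have hRH : R ω ∩ H₀ = H₀.filter (fun h => p h ω ≤ α * π h * rhat ω) := by
        ext g
        simp only [hR ω, Finset.mem_inter, Finset.mem_filter, Finset.mem_univ, true_and]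
        tauto
      rw [hRH]
      have hterm : ∀ h ∈ H₀, ENNReal.ofReal (Λ h / rhat ω) *
          ({ω' | rhat ω' = rhat ω} ∩ A₀ h (rhat ω)).indicator (fun _ => (1:ℝ≥0∞)) ω
          = if p h ω ≤ α * π h * rhat ω then ENNReal.ofReal (Λ h / rhat ω) else 0 := by
        intro h _
        by_cases hc : p h ω ≤ α * π h * rhat ω
        · simp [Set.indicator_apply, Set.mem_inter_iff, Set.mem_setOf_eq, hA₀, hc]
        · simp [Set.indicator_apply, Set.mem_inter_iff, Set.mem_setOf_eq, hA₀, hc]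
      rw [Finset.sum_congr rfl hterm, ← Finset.sum_filter,
        ← ENNReal.ofReal_sum_of_nonneg
          (fun h _ => div_nonneg (hΛ h).le h0.le), ← Finset.sum_div]
    · rw [if_neg h0, ENNReal.ofReal_zero]
      symm
      apply Finset.sum_eq_zero
      intro v hv
      apply Finset.sum_eq_zero
      intro h _
      rw [Set.indicator_of_notMem, mul_zero]
      intro hmem
      have : rhat ω = v := hmem.1
      exact h0 (this ▸ hVpos v hv)
  rw [lintegral_congr hpoint]
  have hmeas_term : ∀ v ∈ V, ∀ h ∈ H₀, Measurable (fun ω =>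
      ENNReal.ofReal (Λ h / v) *
        ({ω | rhat ω = v} ∩ A₀ h v).indicator (fun _ => (1:ℝ≥0∞)) ω) :=
    fun v hv h _ => (Measurable.indicator measurable_const
      ((hrhatmeas v hv).inter (hAmeas h v))).const_mul _
  rw [lintegral_finset_sum _ (fun v hv => Finset.measurable_sum _ (hmeas_term v hv))]
  have hterm_int : ∀ v ∈ V, ∀ h ∈ H₀,
      ∫⁻ ω, ENNReal.ofReal (Λ h / v) *
        ({ω | rhat ω = v} ∩ A₀ h v).indicator (fun _ => (1:ℝ≥0∞)) ω ∂P
      = ENNReal.ofReal (Λ h / v) * P ({ω | rhat ω = v} ∩ A₀ h v) := by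
    intro v hv h hh
    have : (fun ω => ENNReal.ofReal (Λ h / v) *
        ({ω | rhat ω = v} ∩ A₀ h v).indicator (fun _ => (1:ℝ≥0∞)) ω)
        = ({ω | rhat ω = v} ∩ A₀ h v).indicator (fun _ => ENNReal.ofReal (Λ h / v)) := by
      funext ω
      by_cases hmem : ω ∈ {ω | rhat ω = v} ∩ A₀ h v
      · simp [Set.indicator_of_mem hmem]
      · simp [Set.indicator_of_notMem hmem]
    rw [this, lintegral_indicator_const ((hrhatmeas v hv).inter (hAmeas h v))]
  calc ∑ v ∈ V, ∫⁻ ω, ∑ h ∈ H₀, ENNReal.ofReal (Λ h / v) *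
          ({ω | rhat ω = v} ∩ A₀ h v).indicator (fun _ => (1:ℝ≥0∞)) ω ∂P
      = ∑ v ∈ V, ∑ h ∈ H₀, ENNReal.ofReal (Λ h / v) * P ({ω | rhat ω = v} ∩ A₀ h v) := by
        apply Finset.sum_congr rfl
        intro v hv
        rw [lintegral_finset_sum _ (hmeas_term v hv)]
        exact Finset.sum_congr rfl (hterm_int v hv)
    _ = ∑ h ∈ H₀, ∑ v ∈ V, ENNReal.ofReal (Λ h / v) * P ({ω | rhat ω = v} ∩ A₀ h v) :=
        Finset.sum_comm
    _ ≤ ∑ h ∈ H₀, ENNReal.ofReal (α * (Λ h * π h)) := by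
        apply Finset.sum_le_sum
        intro h hh
        -- rewrite each term inside ofReal
        have hterm : ∀ v ∈ V, ENNReal.ofReal (Λ h / v) * P ({ω | rhat ω = v} ∩ A₀ h v)
            = ENNReal.ofReal ((Λ h / v) * (P ({ω | rhat ω = v} ∩ A₀ h v)).toReal) := by
          intro v hv
          rw [ENNReal.ofReal_mul (div_nonneg (hΛ h).le (hVpos v hv).le),
            ENNReal.ofReal_toReal (measure_ne_top _ _)]
        rw [Finset.sum_congr rfl hterm, ← ENNReal.ofReal_sum_of_nonneg
          (fun v hv => mul_nonneg (div_nonneg (hΛ h).le (hVpos v hv).le)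
            ENNReal.toReal_nonneg)]
        apply ENNReal.ofReal_le_ofReal
        -- reduce to the key real inequality
        set g : ℝ → ℝ := fun v => (P ({ω | rhat ω = v} ∩ A₀ h v)).toReal / v with hg
        have hc0 : (0:ℝ) ≤ α * π h := mul_nonneg hα.le (hπ h).1
        have hstep : ∑ v ∈ V, (Λ h / v) * (P ({ω | rhat ω = v} ∩ A₀ h v)).toReal
            = Λ h * ∑ v ∈ V, g v := by
          rw [Finset.mul_sum]
          apply Finset.sum_congr rfl
          intro v hv
          rw [hg]
          ring
        rw [hstep]
        have hkey : ∑ v ∈ V, g v ≤ α * π h := by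
          set l : List ℝ := V.sort (· ≤ ·) with hl
          have hsortl : l.Pairwise (· < ·) := (Finset.sortedLT_sort V).pairwise
          have hmeml : ∀ x : ℝ, x ∈ l ↔ x ∈ V := fun x => Finset.mem_sort _
          have hlsum : ∑ v ∈ V, g v = (l.map g).sum := by
            rw [← Finset.sum_map_toList]
            exact (((Finset.sort_perm_toList V (· ≤ ·)).map g).sum_eq).symm
          -- identification of the sum with Tsum
          have hTid : ∀ l₂ l₁ : List ℝ, l = l₁ ++ l₂ →
              (l₂.map g).sum = Tsum P (A₀ h) E₀ l₂ := by
            intro l₂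
            induction l₂ with
            | nil => intro l₁ _; simp [Tsum]
            | cons v t ih =>
              intro l₁ heq
              have hvl : v ∈ l := by
                rw [heq]; exact List.mem_append_right _ (List.mem_cons_self)
              have hvV : v ∈ V := (hmeml v).mp hvl
              have hpw : (l₁ ++ v :: t).Pairwise (· < ·) := heq ▸ hsortl
              obtain ⟨hpw1, hpw2, hpw12⟩ := List.pairwise_append.mp hpw
              have hsetid : {ω | rhat ω = v} = E₀ v \ headSet E₀ t := by
                ext ω
                constructor
                · intro hω
                  have hωv : rhat ω = v := hω
                  constructor
                  · show v ≤ rhat ω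
                    rw [hωv]
                  · cases t with
                    | nil => exact Set.notMem_empty ω
                    | cons w t' =>
                      show ¬ (w ≤ rhat ω)
                      have hvw : v < w := (List.pairwise_cons.mp hpw2).1 w
                        (List.mem_cons_self)
                      rw [hωv]
                      exact not_le.mpr hvw
                · rintro ⟨h1, h2⟩
                  have h1' : v ≤ rhat ω := h1
                  by_contra hne
                  have hne' : rhat ω ≠ v := hne
                  have h0 : 0 < rhat ω := lt_of_lt_of_le (hVpos v hvV) h1'
                  have hrl : rhat ω ∈ l := (hmeml _).mpr (hrhatV ω h0)
                  rw [heq] at hrl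
                  rcases List.mem_append.mp hrl with hl1 | hl2
                  · exact absurd (hpw12 _ hl1 v (List.mem_cons_self))
                      (not_lt.mpr h1')
                  · rcases List.mem_cons.mp hl2 with heqv | hlt
                    · exact hne' heqv
                    · cases t with
                      | nil => exact absurd hlt List.not_mem_nil
                      | cons w t' =>
                        have hwr : ¬ (w ≤ rhat ω) := h2
                        rcases List.mem_cons.mp hlt with rfl | hlt'
                        · exact hwr le_rfl
                        · have hwlt : w < rhat ω :=
                            (List.pairwise_cons.mp
                              ((List.pairwise_cons.mp hpw2).2)).1 _ hlt'
                          exact hwr hwlt.le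
              rw [List.map_cons, List.sum_cons, Tsum,
                ih (l₁ ++ [v]) (by rw [heq, List.append_assoc]; rfl)]
              congr 1
              simp only [hg]
              rw [hsetid]
          -- the hypotheses of key_induction
          have hbound : ∀ v ∈ l, (P (A₀ h v)).toReal ≤ (α * π h) * v := by
            intro v hv
            have hv0 : 0 < v := hVpos v ((hmeml v).mp hv)
            have ht0 : 0 ≤ α * π h * v := mul_nonneg hc0 hv0.le
            by_cases ht1 : α * π h * v ≤ 1
            · have := hUnif h hh (α * π h * v) ht0 ht1
              calc (P (A₀ h v)).toReal ≤ (ENNReal.ofReal (α * π h * v)).toReal :=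
                  ENNReal.toReal_mono ENNReal.ofReal_ne_top this
                _ = α * π h * v := ENNReal.toReal_ofReal ht0
            · push_neg at ht1
              calc (P (A₀ h v)).toReal ≤ (1 : ℝ≥0∞).toReal :=
                  ENNReal.toReal_mono ENNReal.one_ne_top prob_le_one
                _ = 1 := ENNReal.toReal_one
                _ ≤ α * π h * v := ht1.le
          have hprds' : ∀ v ∈ l, ∀ w ∈ l, v ≤ w → 0 < (P (A₀ h v)).toReal →
              (P (E₀ w ∩ A₀ h w)).toReal / (P (A₀ h w)).toReal
                ≤ (P (E₀ w ∩ A₀ h v)).toReal / (P (A₀ h v)).toReal := by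
            intro v hv w hw hvw hpos
            have hvV : v ∈ V := (hmeml v).mp hv
            have hwV : w ∈ V := (hmeml w).mp hw
            have hw0 : 0 < w := hVpos w hwV
            have hu : α * π h * v ≤ α * π h * w :=
              mul_le_mul_of_nonneg_left hvw hc0
            have hAsub : A₀ h v ⊆ A₀ h w := hAmono h v w hvw
            have ha_pos : 0 < P (A₀ h v) := by
              rw [pos_iff_ne_zero]
              intro hz
              rw [hz] at hpos
              simp at hpos
            have ha'_pos : 0 < P (A₀ h w) := lt_of_lt_of_le ha_pos (measure_mono hAsub)
            have hup : ∀ z z' : ι → ℝ, z ∈ (ERset Λ π α w)ᶜ →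
                (∀ i, z i ≤ z' i) → z' ∈ (ERset Λ π α w)ᶜ :=
              fun z z' hz hzz' hmem' => hz (ERset_anti Λ π hΛ α w z z' hzz' hmem')
            have hPR := hPRDS h hh ((ERset Λ π α w)ᶜ)
              (ERset_measurable Λ π α w).compl hup (α * π h * v) (α * π h * w)
              hu ha_pos
            have hsetu : ∀ u : ℝ, {ω | (fun i => p i ω) ∈ (ERset Λ π α w)ᶜ ∧ p h ω ≤ u}
                = (E₀ w)ᶜ ∩ {ω | p h ω ≤ u} := by
              intro u
              ext ω
              simp only [Set.mem_setOf_eq, Set.mem_inter_iff, Set.mem_compl_iff,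
                hEvpre w hw0, Set.mem_preimage]
            rw [hsetu, hsetu] at hPR
            -- complement arithmetic in ℝ≥0∞
            set a := P (A₀ h v) with ha
            set a' := P (A₀ h w) with ha'
            set x := P ((E₀ w)ᶜ ∩ A₀ h v) with hx
            set x' := P ((E₀ w)ᶜ ∩ A₀ h w) with hx'
            set y := P (E₀ w ∩ A₀ h v) with hy
            set y' := P (E₀ w ∩ A₀ h w) with hy'
            have hEw : MeasurableSet (E₀ w) := hEmeas w hw0
            have hxy : y + x = a := by
              have := measure_inter_add_diff (μ := P) (A₀ h v) hEw
              rw [hy, hx, ha, Set.inter_comm, ← this]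
              congr 1
              rw [Set.diff_eq, Set.inter_comm]
            have hxy' : y' + x' = a' := by
              have := measure_inter_add_diff (μ := P) (A₀ h w) hEw
              rw [hy', hx', ha', Set.inter_comm, ← this]
              congr 1
              rw [Set.diff_eq, Set.inter_comm]
            have hane : a ≠ 0 := ha_pos.ne'
            have hatop : a ≠ ⊤ := measure_ne_top _ _
            have ha'ne : a' ≠ 0 := ha'_pos.ne'
            have ha'top : a' ≠ ⊤ := measure_ne_top _ _
            have hdiv : y / a + x / a = 1 := by
              rw [ENNReal.div_add_div_same, hxy, ENNReal.div_self hane hatop]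
            have hdiv' : y' / a' + x' / a' = 1 := by
              rw [ENNReal.div_add_div_same, hxy', ENNReal.div_self ha'ne ha'top]
            have hxa_ne_top : x / a ≠ ⊤ := by
              exact (ENNReal.div_lt_top (measure_ne_top _ _) hane).ne
            have hmain : y' / a' ≤ y / a := by
              have h1 : y' / a' + x / a ≤ y' / a' + x' / a' :=
                add_le_add (le_refl _) hPR
              rw [hdiv', ← hdiv] at h1
              exact (ENNReal.add_le_add_iff_right hxa_ne_top).mp h1
            have hya_ne_top : y / a ≠ ⊤ :=
              (ENNReal.div_lt_top (measure_ne_top _ _) hane).ne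
            have := ENNReal.toReal_mono hya_ne_top hmain
            rwa [ENNReal.toReal_div, ENNReal.toReal_div] at this
          have hTle : Tsum P (A₀ h) E₀ l ≤ (α * π h) * betaP P (A₀ h) E₀ l :=
            key_induction P (A₀ h) E₀ (α * π h) hc0 l
              (fun v _ => hAmeas h v)
              (fun v hv => hEmeas v (hVpos v ((hmeml v).mp hv)))
              hsortl
              (fun v hv => hVpos v ((hmeml v).mp hv))
              hbound
              (fun v _ w _ hvw => hAmono h v w hvw)
              (fun v _ w _ hvw => hEanti v w hvw)
              hprds'
          calc ∑ v ∈ V, g v = (l.map g).sum := hlsum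
            _ = Tsum P (A₀ h) E₀ l := hTid l [] rfl
            _ ≤ (α * π h) * betaP P (A₀ h) E₀ l := hTle
            _ ≤ (α * π h) * 1 :=
              mul_le_mul_of_nonneg_left (betaP_le_one P (A₀ h) E₀ l) hc0
            _ = α * π h := mul_one _
        calc Λ h * ∑ v ∈ V, g v ≤ Λ h * (α * π h) :=
            mul_le_mul_of_nonneg_left hkey (hΛ h).le
          _ = α * (Λ h * π h) := by ring
    _ = ENNReal.ofReal (α * ∑ h ∈ H₀, Λ h * π h) := by
        rw [Finset.mul_sum, ← ENNReal.ofReal_sum_of_nonneg]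
        intro h _
        exact mul_nonneg hα.le (mul_nonneg (hΛ h).le (hπ h).1)
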